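/- For every k ≥ 1, the k×k factors E_k[1..k][j..j+k−1], for j = 1, …, 2^k − k + 1, are pairwise distinct; hence P_{E_k}(k,k) ≥ 2^k − k + 1 and δ_□(E_k) ≥ (2^k − k + 1)/k². -/

import Mathlib

/-!
Statement 13: For every `k ≥ 1`, the `k × k` factors of `E_k` at horizontal
offsets `j = 0, …, 2^k − k` (0-based) are pairwise distinct; hence
`P_{E_k}(k,k) ≥ 2^k − k + 1` and `δ_□(E_k) ≥ (2^k − k + 1)/k²`.
Here `E_k[i][j] = testBit j i` is the binary 2D string with `k` rows and `2^k`
columns whose `j`-th column is the `k`-bit binary representation of `j`.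
-/

/-- The `k₁ × k₂` factor of the 2D string `M` with top-left corner `(i, j)` (0-based). -/
def factorAt {α : Type*} (M : ℕ → ℕ → α) (k₁ k₂ i j : ℕ) : Fin k₁ → Fin k₂ → α :=
  fun a b => M (i + a) (j + b)

/-- `P_M(k₁,k₂)`: the number of distinct `k₁ × k₂` factors of the `m × n` 2D string `M`. -/
def numFactors {α : Type*} [DecidableEq α] (M : ℕ → ℕ → α) (m n k₁ k₂ : ℕ) : ℕ :=
  ((Finset.range (m - k₁ + 1) ×ˢ Finset.range (n - k₂ + 1)).image
    (fun p => factorAt M k₁ k₂ p.1 p.2)).card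

/-- `δ_□(M) = max{ P_M(k,k)/k² : 1 ≤ k ≤ min(m,n) }`. -/
def deltaSqMeasure {α : Type*} [DecidableEq α] (M : ℕ → ℕ → α) (m n : ℕ) : ℚ≥0 :=
  (Finset.Icc 1 (min m n)).sup
    (fun t => (numFactors M m n t t : ℚ≥0) / ((t * t : ℕ) : ℚ≥0))

/-- The 2D string `E_k` (independent of `k` as a total function):
`E i j` is the `i`-th binary digit of `j`. -/
def Emat : ℕ → ℕ → Bool := fun i j => Nat.testBit j i

theorem statement13 (k : ℕ) (hk : 1 ≤ k) :
    (∀ j j', j + k ≤ 2 ^ k → j' + k ≤ 2 ^ k →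
      (∀ a b, a < k → b < k → Emat a (j + b) = Emat a (j' + b)) → j = j') ∧
    2 ^ k - k + 1 ≤ numFactors Emat k (2 ^ k) k k ∧
    ((2 ^ k - k + 1 : ℕ) : ℚ≥0) / (((k : ℕ) : ℚ≥0) ^ 2) ≤
      deltaSqMeasure Emat k (2 ^ k) := by
  have hk2 : k < 2 ^ k := Nat.lt_two_pow_self (n := k)
  have hinj : ∀ j j', j + k ≤ 2 ^ k → j' + k ≤ 2 ^ k →
      (∀ a b, a < k → b < k → Emat a (j + b) = Emat a (j' + b)) → j = j' := by
    intro j j' hj hj' h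
    have hjlt : j < 2 ^ k := by omega
    have hj'lt : j' < 2 ^ k := by omega
    apply Nat.eq_of_testBit_eq
    intro a
    by_cases ha : a < k
    · have := h a 0 ha hk
      simpa [Emat] using this
    · push_neg at ha
      have hle : (2:ℕ) ^ k ≤ 2 ^ a := Nat.pow_le_pow_right (by norm_num) ha
      rw [Nat.testBit_lt_two_pow (by omega), Nat.testBit_lt_two_pow (by omega)]
  have hcard : 2 ^ k - k + 1 ≤ numFactors Emat k (2 ^ k) k k := by
    unfold numFactors
    rw [Finset.card_image_of_injOn]
    · rw [Finset.card_product, Finset.card_range, Finset.card_range]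
      have : k - k + 1 = 1 := by omega
      rw [this, one_mul]
    · intro p hp q hq he
      simp only [Finset.mem_coe, Finset.mem_product, Finset.mem_range] at hp hq
      obtain ⟨hp1, hp2⟩ := hp
      obtain ⟨hq1, hq2⟩ := hq
      have hp0 : p.1 = 0 := by omega
      have hq0 : q.1 = 0 := by omega
      have h2 : p.2 = q.2 := by
        apply hinj _ _ (by omega) (by omega)
        intro a b ha hb
        have := congrFun (congrFun he ⟨a, ha⟩) ⟨b, hb⟩
        simpa [factorAt, hp0, hq0] using this
      exact Prod.ext (hp0.trans hq0.symm) h2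
  refine ⟨hinj, hcard, ?_⟩
  have hmem : k ∈ Finset.Icc 1 (min k (2 ^ k)) := by
    simp only [Finset.mem_Icc]
    exact ⟨hk, le_min le_rfl (le_of_lt hk2)⟩
  refine le_trans ?_ (Finset.le_sup hmem)
  have hc : ((k * k : ℕ) : ℚ≥0) = ((k : ℕ) : ℚ≥0) ^ 2 := by push_cast; ring
  rw [hc]
  gcongr
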